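/- Let n ≥ 1 be an integer, 0 < α < n and 1 < p < ∞. There exists a constant C = C(n, α, p) such that for every nonnegative f ∈ L^p(ℝ^{n+1}) with ‖f‖_{L^p} > 0, every integer ℓ ≥ 0, every j ∈ ℤ and every (x,t) ∈ ℝ^{n+1}, (Δ_{ℓj} I_α f)(x,t) ≤ C θ_ℓ(x,t)^{1/p} ‖f‖_{L^p(ℝ^{n+1})} (2^{j−ℓ} 2^{jn})^{α/n − 1/p}. -/

import Mathlib

open MeasureTheory ENNReal NNReal

noncomputable section

/-- `ℝ^{n+1}` as `ℝ^n × ℝ`. -/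
abbrev Pt (n : ℕ) := EuclideanSpace ℝ (Fin n) × ℝ

/-- The open light cone `Λ = {(y,s) : |s| > |y|}`. -/
def lightCone (n : ℕ) : Set (Pt n) := {p | ‖p.1‖ < |p.2|}

/-- The integrand `f(x−y, t−s) (|s|+|y|)^{α−n} (|s|−|y|)^{α/n−1}`. -/
def ker (n : ℕ) (α : ℝ) (f : Pt n → ℝ) (z p : Pt n) : ℝ≥0∞ :=
  ENNReal.ofReal (f (z.1 - p.1, z.2 - p.2)) *
    ENNReal.ofReal ((|p.2| + ‖p.1‖) ^ (α - n) * (|p.2| - ‖p.1‖) ^ (α / n - 1))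

/-- The light-cone fractional integral `I_α f`. -/
def Iop (n : ℕ) (α : ℝ) (f : Pt n → ℝ) (z : Pt n) : ℝ≥0∞ :=
  ∫⁻ p in lightCone n, ker n α f z p

/-- The shifted cone shell `Λ_{ℓj}(x,t)`. -/
def shellAt (n : ℕ) (ℓ j : ℤ) (c : Pt n) : Set (Pt n) :=
  {p | (2:ℝ) ^ j ≤ |p.2 - c.2| + ‖p.1 - c.1‖ ∧ |p.2 - c.2| + ‖p.1 - c.1‖ < (2:ℝ) ^ (j + 1) ∧
       (2:ℝ) ^ (j - ℓ) ≤ |p.2 - c.2| - ‖p.1 - c.1‖ ∧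
       |p.2 - c.2| - ‖p.1 - c.1‖ < (2:ℝ) ^ (j - ℓ + 1)}

/-- The dyadic enlargement `Λ*_{ℓj}(x,t)`. -/
def shellStarAt (n : ℕ) (ℓ j : ℤ) (c : Pt n) : Set (Pt n) :=
  {p | (2:ℝ) ^ (j - 3) ≤ |p.2 - c.2| + ‖p.1 - c.1‖ ∧
       |p.2 - c.2| + ‖p.1 - c.1‖ < (2:ℝ) ^ (j + 3) ∧
       (2:ℝ) ^ (j - ℓ - 3) ≤ |p.2 - c.2| - ‖p.1 - c.1‖ ∧
       |p.2 - c.2| - ‖p.1 - c.1‖ < (2:ℝ) ^ (j - ℓ + 3)}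

/-- The cone shell `Λ_{ℓj}` (centered at the origin). -/
def shell (n : ℕ) (ℓ j : ℤ) : Set (Pt n) := shellAt n ℓ j 0

/-- The discrete dyadic cone `Λ_ℓ = ⋃_j Λ_{ℓj}`. -/
def Lam (n : ℕ) (ℓ : ℤ) : Set (Pt n) := ⋃ j : ℤ, shell n ℓ j

/-- The partial operator `Δ_{ℓj} I_α f`. -/
def Dlj (n : ℕ) (α : ℝ) (ℓ j : ℤ) (f : Pt n → ℝ) (z : Pt n) : ℝ≥0∞ :=
  ∫⁻ p in shell n ℓ j, ker n α f z p

/-- The partial operator `Δ_ℓ I_α f`. -/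
def Dl (n : ℕ) (α : ℝ) (ℓ : ℤ) (f : Pt n → ℝ) (z : Pt n) : ℝ≥0∞ :=
  ∫⁻ p in Lam n ℓ, ker n α f z p

/-- `θ_ℓ(x,t) = ‖f‖_p^{−p} ∬_{Λ_ℓ} f(x−y,t−s)^p dy ds`. -/
def theta (n : ℕ) (p : ℝ) (f : Pt n → ℝ) (ℓ : ℤ) (z : Pt n) : ℝ≥0∞ :=
  (∫⁻ w in Lam n ℓ, ENNReal.ofReal (f (z.1 - w.1, z.2 - w.2)) ^ p) /
    eLpNorm f (ENNReal.ofReal p) volume ^ p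

/-- The cone of directions `Γ^ν_η` with central direction `e`. -/
def coneDir (n η : ℕ) (e : EuclideanSpace ℝ (Fin n)) : Set (EuclideanSpace ℝ (Fin n)) :=
  {y | y ≠ 0 ∧ ‖(‖y‖⁻¹ • y) - e‖ ≤ 4 * (2:ℝ) ^ (-(η:ℝ))}

/-- The directional maximal operator `M^ν_η`. -/
def Mnu (n η : ℕ) (e : EuclideanSpace ℝ (Fin n)) (f : Pt n → ℝ) (z : Pt n) : ℝ≥0∞ :=
  ⨆ (ℓ : ℕ) (_ : ℓ ≤ η) (j : ℤ),
    (ENNReal.ofReal ((2:ℝ) ^ j * (2:ℝ) ^ (j - (ℓ:ℤ)) * (2:ℝ) ^ ((j - (η:ℤ)) * ((n:ℤ) - 1))))⁻¹ *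
      ∫⁻ p in {p : Pt n | p ∈ shell n ℓ j ∧ p.1 ∈ coneDir n η e},
        ENNReal.ofReal (f (z.1 - p.1, z.2 - p.2))

/-- The averaged maximal operator `M_η`. -/
def Meta (n η : ℕ) {ι : Type} [Fintype ι] (y : ι → EuclideanSpace ℝ (Fin n)) (f : Pt n → ℝ)
    (z : Pt n) : ℝ≥0∞ :=
  (ENNReal.ofReal ((2:ℝ) ^ ((η:ℤ) * ((n:ℤ) - 1))))⁻¹ * ∑ ν, Mnu n η (y ν) f z

/-- `Ω^α(x,t) = (|t|+|x|)^{α−n} (|t|−|x|)^{α/n−1}`. -/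
def Om (n : ℕ) (α : ℝ) (p : Pt n) : ℝ≥0∞ :=
  ENNReal.ofReal ((|p.2| + ‖p.1‖) ^ (α - n) * (|p.2| - ‖p.1‖) ^ (α / n - 1))

/-! ### Auxiliary lemmas -/

lemma mem_shell_iff {n : ℕ} {ℓ j : ℤ} {p : Pt n} :
    p ∈ shell n ℓ j ↔ (2:ℝ) ^ j ≤ |p.2| + ‖p.1‖ ∧ |p.2| + ‖p.1‖ < (2:ℝ) ^ (j + 1) ∧
      (2:ℝ) ^ (j - ℓ) ≤ |p.2| - ‖p.1‖ ∧ |p.2| - ‖p.1‖ < (2:ℝ) ^ (j - ℓ + 1) := by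
  simp [shell, shellAt]

lemma measurableSet_shell (n : ℕ) (ℓ j : ℤ) : MeasurableSet (shell n ℓ j) := by
  have hg : Measurable fun p : Pt n => |p.2| + ‖p.1‖ :=
    measurable_snd.abs.add measurable_fst.norm
  have hh : Measurable fun p : Pt n => |p.2| - ‖p.1‖ :=
    measurable_snd.abs.sub measurable_fst.norm
  have : shell n ℓ j = {p : Pt n | (2:ℝ) ^ j ≤ |p.2| + ‖p.1‖} ∩
      ({p : Pt n | |p.2| + ‖p.1‖ < (2:ℝ)^(j+1)} ∩
        ({p : Pt n | (2:ℝ)^(j-ℓ) ≤ |p.2| - ‖p.1‖} ∩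
          {p : Pt n | |p.2| - ‖p.1‖ < (2:ℝ)^(j-ℓ+1)})) := by
    ext p; simp [mem_shell_iff, and_assoc]
  rw [this]
  exact (measurableSet_le measurable_const hg).inter
    ((measurableSet_lt hg measurable_const).inter
      ((measurableSet_le measurable_const hh).inter (measurableSet_lt hh measurable_const)))

lemma shell_volume {n : ℕ} (hn : 1 ≤ n) (ℓ j : ℤ) :
    volume (shell n ℓ j) ≤
      ENNReal.ofReal ((2:ℝ) ^ (n + 1)) * volume (Metric.ball (0 : EuclideanSpace ℝ (Fin n)) 1) *
        ENNReal.ofReal ((2:ℝ) ^ (j - ℓ) * (2:ℝ) ^ (j * (n:ℤ))) := by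
  haveI : Nonempty (Fin n) := ⟨⟨0, hn⟩⟩
  haveI : Nontrivial (EuclideanSpace ℝ (Fin n)) := inferInstance
  have hR0 : (0:ℝ) < (2:ℝ) ^ (j + 1) := by positivity
  have hh0 : (0:ℝ) < (2:ℝ) ^ (j - ℓ) := by positivity
  have hvol : volume (shell n ℓ j)
      = ∫⁻ y : EuclideanSpace ℝ (Fin n), volume (Prod.mk y ⁻¹' shell n ℓ j) := by
    rw [MeasureTheory.Measure.volume_eq_prod, Measure.prod_apply (measurableSet_shell n ℓ j)]
  rw [hvol]
  have hbound : ∀ y : EuclideanSpace ℝ (Fin n), volume (Prod.mk y ⁻¹' shell n ℓ j) ≤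
      (Metric.ball (0 : EuclideanSpace ℝ (Fin n)) ((2:ℝ) ^ (j+1))).indicator
        (fun _ => ENNReal.ofReal ((2:ℝ) ^ (j - ℓ)) + ENNReal.ofReal ((2:ℝ) ^ (j - ℓ))) y := by
    intro y
    by_cases hy : y ∈ Metric.ball (0 : EuclideanSpace ℝ (Fin n)) ((2:ℝ) ^ (j+1))
    · rw [Set.indicator_of_mem hy]
      have h2exp : (2:ℝ) ^ (j - ℓ + 1) = (2:ℝ) ^ (j - ℓ) + (2:ℝ) ^ (j - ℓ) := by
        rw [zpow_add₀ (two_ne_zero) (j - ℓ) 1, zpow_one]; ring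
      have hsub : Prod.mk y ⁻¹' shell n ℓ j ⊆
          Set.Icc (-((2:ℝ)^(j-ℓ) + ‖y‖ + (2:ℝ)^(j-ℓ))) (-((2:ℝ)^(j-ℓ) + ‖y‖)) ∪
            Set.Icc ((2:ℝ)^(j-ℓ) + ‖y‖) ((2:ℝ)^(j-ℓ) + ‖y‖ + (2:ℝ)^(j-ℓ)) := by
        intro s hs
        rw [Set.mem_preimage, mem_shell_iff] at hs
        obtain ⟨-, -, h3, h4⟩ := hs
        simp only at h3 h4
        rw [h2exp] at h4
        simp only [Set.mem_union, Set.mem_Icc]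
        rcases abs_cases s with ⟨he, hs0⟩ | ⟨he, hs0⟩ <;> rw [he] at h3 h4
        · exact Or.inr ⟨by linarith, by linarith⟩
        · exact Or.inl ⟨by linarith, by linarith⟩
      calc volume (Prod.mk y ⁻¹' shell n ℓ j)
          ≤ volume (Set.Icc (-((2:ℝ)^(j-ℓ) + ‖y‖ + (2:ℝ)^(j-ℓ))) (-((2:ℝ)^(j-ℓ) + ‖y‖)) ∪
              Set.Icc ((2:ℝ)^(j-ℓ) + ‖y‖) ((2:ℝ)^(j-ℓ) + ‖y‖ + (2:ℝ)^(j-ℓ))) :=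
            measure_mono hsub
        _ ≤ volume (Set.Icc (-((2:ℝ)^(j-ℓ) + ‖y‖ + (2:ℝ)^(j-ℓ))) (-((2:ℝ)^(j-ℓ) + ‖y‖))) +
              volume (Set.Icc ((2:ℝ)^(j-ℓ) + ‖y‖) ((2:ℝ)^(j-ℓ) + ‖y‖ + (2:ℝ)^(j-ℓ))) :=
            measure_union_le _ _
        _ ≤ ENNReal.ofReal ((2:ℝ)^(j-ℓ)) + ENNReal.ofReal ((2:ℝ)^(j-ℓ)) := by
            rw [Real.volume_Icc, Real.volume_Icc]
            exact add_le_add (ENNReal.ofReal_le_ofReal (by linarith))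
              (ENNReal.ofReal_le_ofReal (by linarith))
    · have hempty : Prod.mk y ⁻¹' shell n ℓ j = ∅ := by
        ext s
        simp only [Set.mem_preimage, Set.mem_empty_iff_false, iff_false]
        intro hs
        rw [mem_shell_iff] at hs
        obtain ⟨-, h2, -, -⟩ := hs
        simp only at h2
        exact hy (by
          rw [Metric.mem_ball, dist_zero_right]
          have := abs_nonneg s
          linarith)
      simp [hempty]
  have key : ((2:ℝ)^(j-ℓ) + (2:ℝ)^(j-ℓ)) * ((2:ℝ)^(j+1)) ^ n
      = (2:ℝ)^(n+1) * ((2:ℝ)^(j-ℓ) * (2:ℝ)^(j*(n:ℤ))) := by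
    have h2 : ((2:ℝ)^(j+1)) ^ n = (2:ℝ)^((j+1)*(n:ℤ)) := by
      rw [← zpow_natCast ((2:ℝ)^(j+1)) n, ← zpow_mul]
    have h3 : (2:ℝ)^((j+1)*(n:ℤ)) = (2:ℝ)^((n:ℤ)) * (2:ℝ)^(j*(n:ℤ)) := by
      rw [← zpow_add₀ (two_ne_zero : (2:ℝ) ≠ 0)]; congr 1; ring
    have h4 : ((2:ℝ))^(n+1) = 2 * (2:ℝ)^((n:ℤ)) := by
      rw [pow_succ, zpow_natCast]; ring
    rw [h2, h3, h4]; ring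
  calc (∫⁻ y : EuclideanSpace ℝ (Fin n), volume (Prod.mk y ⁻¹' shell n ℓ j))
      ≤ ∫⁻ y : EuclideanSpace ℝ (Fin n),
          (Metric.ball (0 : EuclideanSpace ℝ (Fin n)) ((2:ℝ) ^ (j+1))).indicator
            (fun _ => ENNReal.ofReal ((2:ℝ) ^ (j - ℓ)) + ENNReal.ofReal ((2:ℝ) ^ (j - ℓ))) y :=
        lintegral_mono hbound
    _ = (ENNReal.ofReal ((2:ℝ) ^ (j - ℓ)) + ENNReal.ofReal ((2:ℝ) ^ (j - ℓ))) *
          volume (Metric.ball (0 : EuclideanSpace ℝ (Fin n)) ((2:ℝ) ^ (j+1))) :=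
        lintegral_indicator_const measurableSet_ball _
    _ = (ENNReal.ofReal ((2:ℝ) ^ (j - ℓ)) + ENNReal.ofReal ((2:ℝ) ^ (j - ℓ))) *
          (ENNReal.ofReal (((2:ℝ) ^ (j+1)) ^ n) *
            volume (Metric.ball (0 : EuclideanSpace ℝ (Fin n)) 1)) := by
        rw [Measure.addHaar_ball volume (0 : EuclideanSpace ℝ (Fin n)) hR0.le,
          finrank_euclideanSpace_fin]
    _ = ENNReal.ofReal ((2:ℝ) ^ (n + 1)) *
          volume (Metric.ball (0 : EuclideanSpace ℝ (Fin n)) 1) *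
          ENNReal.ofReal ((2:ℝ) ^ (j - ℓ) * (2:ℝ) ^ (j * (n:ℤ))) := by
        rw [← ENNReal.ofReal_add hh0.le hh0.le, ← mul_assoc,
          ← ENNReal.ofReal_mul (by positivity), key,
          ENNReal.ofReal_mul (by positivity : (0:ℝ) ≤ (2:ℝ)^(n+1))]
        ring

theorem stmt10 (n : ℕ) (hn : 1 ≤ n) (α : ℝ) (hα0 : 0 < α) (hαn : α < n)
    (p : ℝ) (hp : 1 < p) :
    ∃ C : ℝ≥0, 0 < C ∧ ∀ f : Pt n → ℝ, Measurable f → (∀ z, 0 ≤ f z) →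
      MemLp f (ENNReal.ofReal p) volume → eLpNorm f (ENNReal.ofReal p) volume ≠ 0 →
      ∀ (ℓ : ℕ) (j : ℤ) (z : Pt n),
        Dlj n α (ℓ:ℤ) j f z ≤
          C * theta n p f (ℓ:ℤ) z ^ (1 / p) * eLpNorm f (ENNReal.ofReal p) volume *
            ENNReal.ofReal
              (((2:ℝ) ^ (j - (ℓ:ℤ)) * (2:ℝ) ^ (j * (n:ℤ))) ^ (α / n - 1 / p)) := by
  haveI : Nonempty (Fin n) := ⟨⟨0, hn⟩⟩
  have hn0 : (0:ℝ) < n := by exact_mod_cast Nat.lt_of_lt_of_le Nat.zero_lt_one hn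
  have hpq : p.HolderConjugate (Real.conjExponent p) := Real.HolderConjugate.conjExponent hp
  set q := Real.conjExponent p with hq
  have hp0 : 0 < p := hpq.pos
  have hq0 : 0 < q := hpq.symm.pos
  set B := volume (Metric.ball (0 : EuclideanSpace ℝ (Fin n)) 1) with hB
  have hB0 : B ≠ 0 := (Metric.measure_ball_pos volume _ one_pos).ne'
  have hBt : B ≠ ⊤ := measure_ball_lt_top.ne
  set C0 : ℝ≥0∞ := ENNReal.ofReal ((2:ℝ)^(n+1)) * B with hC0
  have hC0_0 : C0 ≠ 0 := by
    apply mul_ne_zero _ hB0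
    simp only [ne_eq, ENNReal.ofReal_eq_zero, not_le]
    positivity
  have hC0_t : C0 ≠ ⊤ := ENNReal.mul_ne_top ENNReal.ofReal_ne_top hBt
  set Cq : ℝ≥0∞ := C0 ^ (1/q) with hCq
  have hCq0 : Cq ≠ 0 := by
    rw [hCq]
    simp [ENNReal.rpow_eq_zero_iff, hC0_0, hC0_t]
  have hCqt : Cq ≠ ⊤ := by
    rw [hCq]
    simp [ENNReal.rpow_eq_top_iff, hC0_0, hC0_t]
  refine ⟨Cq.toNNReal, ENNReal.toNNReal_pos hCq0 hCqt, ?_⟩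
  intro f hf hf0 hmem hfne ℓ j z
  have hcoe : (Cq.toNNReal : ℝ≥0∞) = Cq := ENNReal.coe_toNNReal hCqt
  set N := eLpNorm f (ENNReal.ofReal p) volume with hN
  have hNt : N ≠ ⊤ := hmem.eLpNorm_ne_top
  set A : ℝ := (2:ℝ) ^ (j - (ℓ:ℤ)) * (2:ℝ) ^ (j * (n:ℤ)) with hA
  have hApos : 0 < A := by rw [hA]; positivity
  set S := shell n (ℓ:ℤ) j with hSdef
  have hS : MeasurableSet S := measurableSet_shell n _ j
  set F : Pt n → ℝ≥0∞ := fun w => ENNReal.ofReal (f (z.1 - w.1, z.2 - w.2)) with hF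
  set G : Pt n → ℝ≥0∞ := fun w =>
    ENNReal.ofReal ((|w.2| + ‖w.1‖) ^ (α - (n:ℝ)) * (|w.2| - ‖w.1‖) ^ (α / (n:ℝ) - 1)) with hG
  have hFm : Measurable F :=
    ENNReal.measurable_ofReal.comp (hf.comp
      ((measurable_const.sub measurable_fst).prodMk (measurable_const.sub measurable_snd)))
  have hGm : Measurable G :=
    ENNReal.measurable_ofReal.comp
      (((measurable_snd.abs.add measurable_fst.norm).pow measurable_const).mul
        ((measurable_snd.abs.sub measurable_fst.norm).pow measurable_const))
  have hDlj : Dlj n α (ℓ:ℤ) j f z = ∫⁻ w in S, (F * G) w := by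
    simp only [Dlj, ker, Pi.mul_apply, hF, hG, hSdef]
  have hHolder := ENNReal.lintegral_mul_le_Lp_mul_Lq (volume.restrict S) hpq
    hFm.aemeasurable hGm.aemeasurable
  -- the F-part
  have hNp0 : N ^ p ≠ 0 := by
    intro hcon
    rcases ENNReal.rpow_eq_zero_iff.1 hcon with ⟨h1, -⟩ | ⟨-, h2⟩
    · exact hfne h1
    · linarith
  have hNpt : N ^ p ≠ ⊤ := by
    intro hcon
    rcases ENNReal.rpow_eq_top_iff.1 hcon with ⟨-, h2⟩ | ⟨h1, -⟩
    · linarith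
    · exact hNt h1
  have hT : theta n p f (ℓ:ℤ) z * N ^ p = ∫⁻ w in Lam n (ℓ:ℤ), F w ^ p := by
    rw [theta]
    exact ENNReal.div_mul_cancel hNp0 hNpt
  have hA1 : (∫⁻ w in S, F w ^ p) ≤ theta n p f (ℓ:ℤ) z * N ^ p := by
    rw [hT]
    exact lintegral_mono_set (Set.subset_iUnion (fun j' => shell n (ℓ:ℤ) j') j)
  have hFpart : (∫⁻ w in S, F w ^ p) ^ (1/p) ≤ theta n p f (ℓ:ℤ) z ^ (1/p) * N := by
    calc (∫⁻ w in S, F w ^ p) ^ (1/p)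
        ≤ (theta n p f (ℓ:ℤ) z * N ^ p) ^ (1/p) := ENNReal.rpow_le_rpow hA1 (by positivity)
      _ = theta n p f (ℓ:ℤ) z ^ (1/p) * N := by
          rw [ENNReal.mul_rpow_of_nonneg _ _ (by positivity), ← ENNReal.rpow_mul,
            mul_one_div, div_self hp0.ne', ENNReal.rpow_one]
  -- the G-part
  set K : ℝ := ((2:ℝ)^j) ^ (α - (n:ℝ)) * ((2:ℝ)^(j - (ℓ:ℤ))) ^ (α / (n:ℝ) - 1) with hK
  have hexp1 : α - (n:ℝ) ≤ 0 := by linarith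
  have hexp2 : α / (n:ℝ) - 1 ≤ 0 := by
    have : α / (n:ℝ) ≤ 1 := (div_le_one hn0).2 hαn.le
    linarith
  have hpt : ∀ w ∈ S, G w ^ q ≤ ENNReal.ofReal K ^ q := by
    intro w hw
    refine ENNReal.rpow_le_rpow (ENNReal.ofReal_le_ofReal ?_) hq0.le
    rw [hSdef] at hw
    obtain ⟨h1, -, h3, -⟩ := mem_shell_iff.1 hw
    have hb2 : (0:ℝ) < (2:ℝ)^(j - (ℓ:ℤ)) := by positivity
    have hb1 : (0:ℝ) < (2:ℝ)^j := by positivity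
    exact mul_le_mul
      (Real.rpow_le_rpow_of_nonpos hb1 h1 hexp1)
      (Real.rpow_le_rpow_of_nonpos hb2 h3 hexp2)
      (Real.rpow_nonneg (by linarith) _)
      (Real.rpow_nonneg hb1.le _)
  have hB1 : (∫⁻ w in S, G w ^ q) ≤ ENNReal.ofReal K ^ q * volume S := by
    calc (∫⁻ w in S, G w ^ q) ≤ ∫⁻ _ in S, ENNReal.ofReal K ^ q := setLIntegral_mono' hS hpt
      _ = ENNReal.ofReal K ^ q * volume S := setLIntegral_const S _
  have hB2 : ENNReal.ofReal K ^ q * volume S ≤ ENNReal.ofReal K ^ q * (C0 * ENNReal.ofReal A) := by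
    apply mul_le_mul_right
    have := shell_volume hn (ℓ:ℤ) j
    rw [← hSdef, ← hB, ← hA] at this
    rw [hC0, mul_assoc] at *
    exact this
  have hKA : K = A ^ (α / (n:ℝ) - 1) := by
    have h5 : α - (n:ℝ) = (n:ℝ) * (α / (n:ℝ) - 1) := by field_simp
    have h6 : ((2:ℝ)^j) ^ (α - (n:ℝ)) = ((2:ℝ)^(j*(n:ℤ))) ^ (α / (n:ℝ) - 1) := by
      rw [h5, Real.rpow_mul (by positivity), Real.rpow_natCast]
      congr 1
      rw [← zpow_natCast ((2:ℝ)^j) n, ← zpow_mul]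
    rw [hK, h6, hA, ← Real.mul_rpow (by positivity) (by positivity), mul_comm]
  have hkey : ENNReal.ofReal K * ENNReal.ofReal A ^ (1/q)
      = ENNReal.ofReal (A ^ (α / (n:ℝ) - 1/p)) := by
    rw [hKA, ENNReal.ofReal_rpow_of_pos hApos,
      ← ENNReal.ofReal_mul (Real.rpow_nonneg hApos.le _), ← Real.rpow_add hApos]
    have hee : α / (n:ℝ) - 1 + 1/q = α / (n:ℝ) - 1/p := by
      rw [one_div, one_div, ← hpq.one_sub_inv]; ring
    rw [hee]
  have hGpart : (∫⁻ w in S, G w ^ q) ^ (1/q)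
      ≤ Cq * ENNReal.ofReal (A ^ (α / (n:ℝ) - 1/p)) := by
    calc (∫⁻ w in S, G w ^ q) ^ (1/q)
        ≤ (ENNReal.ofReal K ^ q * (C0 * ENNReal.ofReal A)) ^ (1/q) :=
          ENNReal.rpow_le_rpow (hB1.trans hB2) (by positivity)
      _ = ENNReal.ofReal K * (C0 ^ (1/q) * ENNReal.ofReal A ^ (1/q)) := by
          rw [ENNReal.mul_rpow_of_nonneg _ _ (by positivity),
            ENNReal.mul_rpow_of_nonneg _ _ (by positivity),
            ← ENNReal.rpow_mul, mul_one_div, div_self hq0.ne', ENNReal.rpow_one]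
      _ = Cq * (ENNReal.ofReal K * ENNReal.ofReal A ^ (1/q)) := by rw [hCq]; ring
      _ = Cq * ENNReal.ofReal (A ^ (α / (n:ℝ) - 1/p)) := by rw [hkey]
  -- assemble
  calc Dlj n α (ℓ:ℤ) j f z
      = ∫⁻ w in S, (F * G) w := hDlj
    _ ≤ (∫⁻ w in S, F w ^ p) ^ (1/p) * (∫⁻ w in S, G w ^ q) ^ (1/q) := hHolder
    _ ≤ (theta n p f (ℓ:ℤ) z ^ (1/p) * N) * (Cq * ENNReal.ofReal (A ^ (α / (n:ℝ) - 1/p))) :=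
        mul_le_mul' hFpart hGpart
    _ = (Cq.toNNReal : ℝ≥0∞) * theta n p f (ℓ:ℤ) z ^ (1/p) * N *
          ENNReal.ofReal (A ^ (α / (n:ℝ) - 1/p)) := by
        rw [hcoe]; ring

end
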